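/- arXiv:1309.5636 — 2 statements merged into one kernel-verified Lean document; each statement's English description precedes it below -/
import Mathlib

section
/- If f : (0,∞) → (0,∞) is measurable with ∫₀^∞ f(x) dx < ∞, then ∫₀^∞ exp((1/x) ∫₀^x ln f(t) dt) dx ≤ e · ∫₀^∞ f(x) dx. -/
open MeasureTheory Set

section PKaux
open Real Filter Topology

lemma log_int_Ioc01 : IntegrableOn Real.log (Ioc (0:ℝ) 1) := by
  have ha : Tendsto (fun n : ℕ => 1 / ((n:ℝ) + 1)) atTop (𝓝 0) :=
    tendsto_one_div_add_atTop_nhds_zero_nat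
  have hpos : ∀ n : ℕ, (0:ℝ) < 1 / ((n:ℝ) + 1) := fun n => by positivity
  have hle : ∀ n : ℕ, 1 / ((n:ℝ) + 1) ≤ 1 := fun n => by
    rw [div_le_one (by positivity)]; linarith [Nat.cast_nonneg (α := ℝ) n]
  refine integrableOn_Ioc_of_intervalIntegral_norm_bounded_left
    (I := 1) (fun n => ?_) ha (Eventually.of_forall fun n => ?_)
  · exact (intervalIntegral.intervalIntegrable_log (by
      simp only [Set.uIcc_of_le (hle n), Set.mem_Icc, not_and_or, not_le]
      left; exact hpos n)).1
  · set a := 1 / ((n:ℝ) + 1) with hadef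
    have h0a : 0 < a := hpos n
    have ha1 : a ≤ 1 := hle n
    have hcong : ∫ x in Ioc a 1, ‖Real.log x‖ = ∫ x in Ioc a 1, -Real.log x := by
      refine setIntegral_congr_fun measurableSet_Ioc fun x hx => ?_
      rw [Real.norm_eq_abs, abs_of_nonpos (Real.log_nonpos (h0a.trans hx.1).le hx.2)]
    rw [hcong]
    have : ∫ x in Ioc a 1, -Real.log x = -(∫ x in a..1, Real.log x) := by
      rw [intervalIntegral.integral_of_le ha1, integral_neg]
    rw [this, integral_log]
    have hla : Real.log a ≤ 0 := Real.log_nonpos h0a.le ha1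
    simp only [Real.log_one]
    nlinarith

lemma log_int_Ioc (b : ℝ) : IntegrableOn Real.log (Ioc (0:ℝ) b) := by
  rcases le_or_gt b 1 with hb | hb
  · exact log_int_Ioc01.mono_set (Ioc_subset_Ioc_right hb)
  · have h2 : IntegrableOn Real.log (Icc (1:ℝ) b) := by
      apply ContinuousOn.integrableOn_Icc
      exact Real.continuousOn_log.mono (fun x hx => by
        simp only [mem_compl_iff, mem_singleton_iff]
        intro h; rw [h] at hx; exact absurd hx.1 (by norm_num))
    have : Ioc (0:ℝ) b ⊆ Ioc 0 1 ∪ Icc 1 b := by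
      intro x hx
      rcases le_or_gt x 1 with h | h
      · exact Or.inl ⟨hx.1, h⟩
      · exact Or.inr ⟨h.le, hx.2⟩
    exact (log_int_Ioc01.union h2).mono_set this

lemma integral_log_Ioc {b : ℝ} (hb : 0 < b) :
    ∫ t in Ioc (0:ℝ) b, Real.log t = b * Real.log b - b := by
  set F : ℝ → ℝ := fun u => ∫ t in Ioc (0:ℝ) u, Real.log t with hF
  have hicc : IntegrableOn Real.log (Icc (0:ℝ) b) := by
    rw [integrableOn_Icc_iff_integrableOn_Ioc]
    exact log_int_Ioc b
  have hcont : ContinuousOn F (Icc 0 b) := intervalIntegral.continuousOn_primitive hicc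
  have hF0 : F 0 = 0 := by simp [hF]
  have hne : (𝓝[Ioc (0:ℝ) b] 0).NeBot := by
    refine mem_closure_iff_nhdsWithin_neBot.mp ?_
    rw [closure_Ioc hb.ne]
    exact ⟨le_refl 0, hb.le⟩
  have h1 : Tendsto F (𝓝[Ioc (0:ℝ) b] 0) (𝓝 0) := by
    have h := (hcont 0 ⟨le_refl 0, hb.le⟩).tendsto.mono_left
      (nhdsWithin_mono (0:ℝ) Ioc_subset_Icc_self)
    rwa [hF0] at h
  have h2 : Tendsto (fun a : ℝ => Real.log a * a) (𝓝[Ioc (0:ℝ) b] 0) (𝓝 0) := by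
    have h := tendsto_log_mul_rpow_nhdsGT_zero zero_lt_one
    simp only [Real.rpow_one] at h
    exact h.mono_left (nhdsWithin_mono (0:ℝ) (fun x hx => hx.1))
  have ha' : Tendsto (fun a : ℝ => a) (𝓝[Ioc (0:ℝ) b] 0) (𝓝 0) :=
    tendsto_id.mono_left nhdsWithin_le_nhds
  have h3 : Tendsto (fun a : ℝ => F a + (b * Real.log b - b) - Real.log a * a + a)
      (𝓝[Ioc (0:ℝ) b] 0) (𝓝 (b * Real.log b - b)) := by
    have := ((h1.add (tendsto_const_nhds (x := b * Real.log b - b))).sub h2).add ha'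
    simpa using this
  have heq : ∀ᶠ a in 𝓝[Ioc (0:ℝ) b] 0,
      F a + (b * Real.log b - b) - Real.log a * a + a = F b := by
    filter_upwards [self_mem_nhdsWithin] with a ha
    have h0a : 0 < a := ha.1
    have hab : a ≤ b := ha.2
    have hsplit : ∫ t in Ioc (0:ℝ) b, Real.log t
        = (∫ t in Ioc (0:ℝ) a, Real.log t) + ∫ t in Ioc a b, Real.log t := by
      rw [← Ioc_union_Ioc_eq_Ioc h0a.le hab,
        setIntegral_union (Ioc_disjoint_Ioc.mpr (by rw [min_eq_left hab, max_eq_right h0a.le])) measurableSet_Ioc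
        ((log_int_Ioc b).mono_set (Ioc_subset_Ioc_right hab))
        ((log_int_Ioc b).mono_set (Ioc_subset_Ioc_left h0a.le))]
    have hval : ∫ t in Ioc a b, Real.log t = b * Real.log b - a * Real.log a - b + a := by
      rw [← intervalIntegral.integral_of_le hab, integral_log]
    show F a + (b * Real.log b - b) - Real.log a * a + a = ∫ t in Ioc (0:ℝ) b, Real.log t
    rw [hsplit, hval, hF]; ring
  show F b = b * Real.log b - b
  exact (tendsto_nhds_unique ((tendsto_congr' heq).mp h3) tendsto_const_nhds).symm

lemma jensen_bound (f : ℝ → ℝ) (hf : Measurable f) {x : ℝ} (hx : 0 < x)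
    (hf0 : ∀ t ∈ Ioi (0:ℝ), 0 < f t)
    (hfi : IntegrableOn f (Ioi 0))
    (hlog : IntegrableOn (fun t => Real.log (f t)) (Ioc 0 x)) :
    Real.exp ((1/x) * ∫ t in Ioc (0:ℝ) x, Real.log (f t))
      ≤ Real.exp 1 * (x^2)⁻¹ * ∫ t in Ioc (0:ℝ) x, t * f t := by
  set μx := volume.restrict (Ioc (0:ℝ) x) with hμx
  have hμuniv : μx univ = ENNReal.ofReal x := by
    rw [hμx, Measure.restrict_apply_univ, Real.volume_Ioc, sub_zero]
  haveI : IsFiniteMeasure μx := ⟨by rw [hμuniv]; exact ENNReal.ofReal_lt_top⟩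
  haveI : NeZero μx := ⟨Measure.measure_univ_ne_zero.mp (by
    rw [hμuniv]; simp [hx, hx.le, ENNReal.ofReal_eq_zero, not_le])⟩
  have hInt1 : Integrable (fun t => Real.log t) μx := log_int_Ioc x
  have hh : Integrable (fun t => Real.log t + Real.log (f t)) μx := hInt1.add hlog
  have hmulInt : Integrable (fun t => t * f t) μx := by
    refine Integrable.mono' (((hfi.mono_set Ioc_subset_Ioi_self).const_mul x : _))
      ((measurable_id.mul hf).aestronglyMeasurable) ?_
    rw [hμx, ae_restrict_iff' measurableSet_Ioc]
    refine ae_of_all _ fun t ht => ?_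
    have hft := hf0 t ht.1
    rw [Real.norm_eq_abs, abs_of_nonneg (mul_nonneg ht.1.le hft.le)]
    exact mul_le_mul_of_nonneg_right ht.2 hft.le
  have haeexp : (fun t => Real.exp (Real.log t + Real.log (f t))) =ᵐ[μx] fun t => t * f t := by
    refine (ae_restrict_iff' measurableSet_Ioc).mpr (ae_of_all _ fun t ht => ?_)
    simp only []
    rw [Real.exp_add, Real.exp_log ht.1, Real.exp_log (hf0 t ht.1)]
  have hexp : Integrable (fun t => Real.exp (Real.log t + Real.log (f t))) μx :=
    hmulInt.congr haeexp.symm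
  have hJ := (convexOn_exp).map_average_le continuous_exp.continuousOn isClosed_univ
    (Eventually.of_forall fun _ => mem_univ _) hh hexp
  -- rewrite averages
  rw [average_eq, average_eq, measureReal_def, hμuniv, ENNReal.toReal_ofReal hx.le, smul_eq_mul, smul_eq_mul,
    integral_congr_ae haeexp, integral_add hInt1 hlog] at hJ
  have hlogint : ∫ t, Real.log t ∂μx = x * Real.log x - x := integral_log_Ioc hx
  rw [hlogint] at hJ
  set L := ∫ t in Ioc (0:ℝ) x, Real.log (f t) with hL
  set J := ∫ t in Ioc (0:ℝ) x, t * f t with hJdef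
  have hJ' : Real.exp (x⁻¹ * (x * Real.log x - x + L)) ≤ x⁻¹ * J := hJ
  calc Real.exp ((1/x) * L)
      = Real.exp (x⁻¹ * (x * Real.log x - x + L)) * Real.exp (1 - Real.log x) := by
        rw [← Real.exp_add]; congr 1; field_simp; ring
    _ ≤ (x⁻¹ * J) * Real.exp (1 - Real.log x) :=
        mul_le_mul_of_nonneg_right hJ' (Real.exp_pos _).le
    _ = Real.exp 1 * (x^2)⁻¹ * J := by
        rw [Real.exp_sub, Real.exp_log hx]
        field_simp

lemma tonelli_step (f : ℝ → ℝ) (hf : Measurable f) :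
    (∫⁻ x in Ioi (0:ℝ), ENNReal.ofReal ((x^2)⁻¹) * ∫⁻ t in Ioc (0:ℝ) x, ENNReal.ofReal (t * f t))
      = ∫⁻ t in Ioi (0:ℝ), ENNReal.ofReal (f t) := by
  set S : Set (ℝ × ℝ) := {p : ℝ × ℝ | 0 < p.2 ∧ p.2 ≤ p.1} with hS
  have hSmeas : MeasurableSet S :=
    (measurableSet_lt measurable_const measurable_snd).inter
      (measurableSet_le measurable_snd measurable_fst)
  set F : ℝ → ℝ → ENNReal := fun x t =>
    S.indicator (fun p => ENNReal.ofReal ((p.1^2)⁻¹) * ENNReal.ofReal (p.2 * f p.2)) (x, t)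
    with hF
  have hFmeas : Measurable (Function.uncurry F) := by
    apply Measurable.indicator _ hSmeas
    exact (ENNReal.measurable_ofReal.comp ((measurable_fst.pow_const 2).inv)).mul
      (ENNReal.measurable_ofReal.comp (measurable_snd.mul (hf.comp measurable_snd)))
  have step1 : ∀ x : ℝ,
      ENNReal.ofReal ((x^2)⁻¹) * ∫⁻ t in Ioc (0:ℝ) x, ENNReal.ofReal (t * f t)
        = ∫⁻ t in Ioi (0:ℝ), F x t := by
    intro x
    have hfun : (fun t => F x t)
        = (Ioc (0:ℝ) x).indicator (fun t => ENNReal.ofReal ((x^2)⁻¹) * ENNReal.ofReal (t * f t)) := by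
      funext t
      by_cases h : t ∈ Ioc (0:ℝ) x
      · have : (x, t) ∈ S := ⟨h.1, h.2⟩
        simp [hF, indicator_of_mem h, indicator_of_mem this]
      · have : (x, t) ∉ S := fun hc => h ⟨hc.1, hc.2⟩
        simp [hF, indicator_of_notMem h, indicator_of_notMem this]
    rw [hfun, lintegral_indicator measurableSet_Ioc, Measure.restrict_restrict measurableSet_Ioc,
      inter_eq_left.mpr Ioc_subset_Ioi_self, lintegral_const_mul' _ _ ENNReal.ofReal_ne_top]
  have step3 : ∀ t ∈ Ioi (0:ℝ), (∫⁻ x in Ioi (0:ℝ), F x t) = ENNReal.ofReal (f t) := by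
    intro t ht
    have hfun : (fun x => F x t)
        = (Ici t).indicator (fun x => ENNReal.ofReal ((x^2)⁻¹) * ENNReal.ofReal (t * f t)) := by
      funext x
      by_cases h : x ∈ Ici t
      · have : (x, t) ∈ S := ⟨ht, h⟩
        simp [hF, indicator_of_mem h, indicator_of_mem this]
      · have : (x, t) ∉ S := fun hc => h hc.2
        simp [hF, indicator_of_notMem h, indicator_of_notMem this]
    have hIci : (∫⁻ x in Ici t, ENNReal.ofReal ((x^2)⁻¹)) = ENNReal.ofReal t⁻¹ := by
      rw [← Measure.restrict_congr_set Ioi_ae_eq_Ici]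
      have hint : IntegrableOn (fun x : ℝ => x ^ (-2:ℝ)) (Ioi t) :=
        integrableOn_Ioi_rpow_of_lt (by norm_num) ht
      have hnn : 0 ≤ᵐ[volume.restrict (Ioi t)] fun x : ℝ => x ^ (-2:ℝ) := by
        refine (ae_restrict_iff' measurableSet_Ioi).mpr (ae_of_all _ fun x hx => ?_)
        exact Real.rpow_nonneg (le_of_lt (lt_trans ht hx)) _
      have hval := integral_Ioi_rpow_of_lt (show (-2:ℝ) < -1 by norm_num) ht
      have := (ofReal_integral_eq_lintegral_ofReal hint hnn).symm
      have hcong : (∫⁻ x in Ioi t, ENNReal.ofReal (x ^ (-2:ℝ)))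
          = ∫⁻ x in Ioi t, ENNReal.ofReal ((x^2)⁻¹) := by
        refine setLIntegral_congr_fun measurableSet_Ioi (fun x hx => ?_)
        congr 1
        have hx0 : (0:ℝ) < x := lt_trans ht hx
        rw [Real.rpow_neg hx0.le, show (2:ℝ) = ((2:ℕ):ℝ) by norm_num, Real.rpow_natCast]
      rw [← hcong, this, hval]
      congr 1
      have ht0 : t ≠ 0 := ne_of_gt ht
      rw [show (-2:ℝ) + 1 = -1 by norm_num, Real.rpow_neg_one]
      field_simp
    have hsub : Ici t ∩ Ioi 0 = Ici t :=
      inter_eq_left.mpr (fun y (hy : t ≤ y) => lt_of_lt_of_le ht hy)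
    rw [hfun, lintegral_indicator measurableSet_Ici, Measure.restrict_restrict measurableSet_Ici,
      hsub, lintegral_mul_const' _ _ ENNReal.ofReal_ne_top, hIci, ← ENNReal.ofReal_mul
        (inv_nonneg.mpr (le_of_lt ht))]
    have ht0 : (t:ℝ) ≠ 0 := ne_of_gt ht
    congr 1
    field_simp
  calc (∫⁻ x in Ioi (0:ℝ), ENNReal.ofReal ((x^2)⁻¹) * ∫⁻ t in Ioc (0:ℝ) x, ENNReal.ofReal (t * f t))
      = ∫⁻ x in Ioi (0:ℝ), ∫⁻ t in Ioi (0:ℝ), F x t := by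
        exact setLIntegral_congr_fun measurableSet_Ioi (fun x _ => step1 x)
    _ = ∫⁻ t in Ioi (0:ℝ), ∫⁻ x in Ioi (0:ℝ), F x t :=
        lintegral_lintegral_swap hFmeas.aemeasurable
    _ = ∫⁻ t in Ioi (0:ℝ), ENNReal.ofReal (f t) :=
        setLIntegral_congr_fun measurableSet_Ioi step3

lemma mul_int_Ioc (f : ℝ → ℝ) (hf : Measurable f) {x : ℝ} (hx : 0 < x)
    (hf0 : ∀ t ∈ Ioi (0:ℝ), 0 < f t) (hfi : IntegrableOn f (Ioi 0)) :
    IntegrableOn (fun t => t * f t) (Ioc (0:ℝ) x) := by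
  refine Integrable.mono' (((hfi.mono_set Ioc_subset_Ioi_self).const_mul x : _))
    ((measurable_id.mul hf).aestronglyMeasurable) ?_
  rw [ae_restrict_iff' measurableSet_Ioc]
  refine ae_of_all _ fun t ht => ?_
  have hft := hf0 t ht.1
  rw [Real.norm_eq_abs, abs_of_nonneg (mul_nonneg ht.1.le hft.le)]
  exact mul_le_mul_of_nonneg_right ht.2 hft.le

/-- Pólya–Knopp inequality. -/
theorem polya_knopp (f : ℝ → ℝ) (hf : Measurable f)
    (hf0 : ∀ x ∈ Ioi (0:ℝ), 0 < f x) (hfi : IntegrableOn f (Ioi 0)) :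
    ∫ x in Ioi (0:ℝ), Real.exp ((1/x) * ∫ t in Ioc (0:ℝ) x, Real.log (f t)) ≤
      Real.exp 1 * ∫ x in Ioi (0:ℝ), f x := by
  have hRHSnn : 0 ≤ ∫ x in Ioi (0:ℝ), f x :=
    setIntegral_nonneg measurableSet_Ioi fun x hx => (hf0 x hx).le
  set g : ℝ → ℝ := fun x => Real.exp ((1/x) * ∫ t in Ioc (0:ℝ) x, Real.log (f t)) with hg
  by_cases hcase : ∀ x : ℝ, 0 < x → IntegrableOn (fun t => Real.log (f t)) (Ioc 0 x)
  · -- main case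
    have hFcont : ContinuousOn (fun u => ∫ t in Ioc (0:ℝ) u, Real.log (f t)) (Ioi 0) := by
      intro x₀ hx₀
      have hi : IntegrableOn (fun t => Real.log (f t)) (Icc (0:ℝ) (x₀+1)) := by
        rw [integrableOn_Icc_iff_integrableOn_Ioc]
        exact hcase (x₀+1) (by simp only [mem_Ioi] at hx₀; linarith)
      have hc := intervalIntegral.continuousOn_primitive hi
      have hx₀' : (0:ℝ) < x₀ := hx₀
      exact ((hc x₀ ⟨hx₀'.le, by linarith⟩).continuousAt
        (Icc_mem_nhds hx₀' (by linarith))).continuousWithinAt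
    have hgcont : ContinuousOn g (Ioi 0) := by
      have h1 : ContinuousOn (fun x : ℝ => 1/x) (Ioi 0) :=
        continuousOn_const.div continuousOn_id (fun x hx => ne_of_gt hx)
      exact Real.continuous_exp.comp_continuousOn (h1.mul hFcont)
    have hgnn : 0 ≤ᵐ[volume.restrict (Ioi (0:ℝ))] g := ae_of_all _ fun x => (Real.exp_pos _).le
    have hfnn : 0 ≤ᵐ[volume.restrict (Ioi (0:ℝ))] f :=
      (ae_restrict_iff' measurableSet_Ioi).mpr (ae_of_all _ fun x hx => (hf0 x hx).le)
    rw [integral_eq_lintegral_of_nonneg_ae hgnn (hgcont.aestronglyMeasurable measurableSet_Ioi)]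
    have hbound : (∫⁻ x in Ioi (0:ℝ), ENNReal.ofReal (g x))
        ≤ ENNReal.ofReal (Real.exp 1 * ∫ x in Ioi (0:ℝ), f x) := by
      calc (∫⁻ x in Ioi (0:ℝ), ENNReal.ofReal (g x))
          ≤ ∫⁻ x in Ioi (0:ℝ), ENNReal.ofReal (Real.exp 1)
              * (ENNReal.ofReal ((x^2)⁻¹) * ∫⁻ t in Ioc (0:ℝ) x, ENNReal.ofReal (t * f t)) := by
            refine lintegral_mono_ae ((ae_restrict_iff' measurableSet_Ioi).mpr
              (ae_of_all _ fun x hx => ?_))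
            have hx0 : (0:ℝ) < x := hx
            have hJ := jensen_bound f hf hx0 hf0 hfi (hcase x hx0)
            have hJint := mul_int_Ioc f hf hx0 hf0 hfi
            have hJnn : 0 ≤ᵐ[volume.restrict (Ioc (0:ℝ) x)] fun t => t * f t :=
              (ae_restrict_iff' measurableSet_Ioc).mpr (ae_of_all _ fun t ht =>
                mul_nonneg ht.1.le (hf0 t ht.1).le)
            have hofReal : ENNReal.ofReal (∫ t in Ioc (0:ℝ) x, t * f t)
                = ∫⁻ t in Ioc (0:ℝ) x, ENNReal.ofReal (t * f t) :=
              ofReal_integral_eq_lintegral_ofReal hJint hJnn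
            calc ENNReal.ofReal (g x) ≤ ENNReal.ofReal
                  (Real.exp 1 * (x^2)⁻¹ * ∫ t in Ioc (0:ℝ) x, t * f t) :=
                ENNReal.ofReal_le_ofReal hJ
              _ = ENNReal.ofReal (Real.exp 1) * (ENNReal.ofReal ((x^2)⁻¹)
                  * ∫⁻ t in Ioc (0:ℝ) x, ENNReal.ofReal (t * f t)) := by
                rw [← hofReal, ENNReal.ofReal_mul (by positivity), ENNReal.ofReal_mul
                  (Real.exp_pos 1).le, mul_assoc]
        _ = ENNReal.ofReal (Real.exp 1) * ∫⁻ x in Ioi (0:ℝ), ENNReal.ofReal ((x^2)⁻¹)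
              * ∫⁻ t in Ioc (0:ℝ) x, ENNReal.ofReal (t * f t) :=
            lintegral_const_mul' _ _ ENNReal.ofReal_ne_top
        _ = ENNReal.ofReal (Real.exp 1) * ∫⁻ t in Ioi (0:ℝ), ENNReal.ofReal (f t) := by
            rw [tonelli_step f hf]
        _ = ENNReal.ofReal (Real.exp 1 * ∫ x in Ioi (0:ℝ), f x) := by
            rw [← ofReal_integral_eq_lintegral_ofReal hfi hfnn,
              ← ENNReal.ofReal_mul (Real.exp_pos 1).le]
    exact ENNReal.toReal_le_of_le_ofReal
      (mul_nonneg (Real.exp_pos 1).le hRHSnn) hbound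
  · -- degenerate case
    push_neg at hcase
    obtain ⟨b, hb, hnint⟩ := hcase
    have hgeq : ∀ x ∈ Ioi b, g x = 1 := by
      intro x hx
      have hsub : Ioc (0:ℝ) b ⊆ Ioc 0 x := Ioc_subset_Ioc_right (le_of_lt hx)
      have : ¬ IntegrableOn (fun t => Real.log (f t)) (Ioc 0 x) :=
        fun h => hnint (h.mono_set hsub)
      rw [hg]
      simp only [integral_undef this, mul_zero, Real.exp_zero]
    have hnig : ¬ IntegrableOn g (Ioi (0:ℝ)) := by
      intro h
      have h2 : IntegrableOn g (Ioi b) := h.mono_set (Ioi_subset_Ioi hb.le)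
      have h3 : IntegrableOn (fun _ : ℝ => (1:ℝ)) (Ioi b) :=
        (integrableOn_congr_fun hgeq measurableSet_Ioi).mp h2
      rw [integrableOn_const_iff] at h3
      rcases h3 with h3 | h3
      · norm_num at h3
      · rw [Real.volume_Ioi] at h3; exact absurd h3 (by simp)
    rw [integral_undef hnig]
    exact mul_nonneg (Real.exp_pos 1).le hRHSnn

end PKaux
end

section
/- Let 0 < p, q < ∞, let u, v be weights on (0,∞), f positive on (0,∞), g real continuous strictly monotone, and let w be strictly positive on (0,∞) with W(x) = ∫₀^x w(s) ds satisfying W(+∞) = +∞. Then the inequality (∫₀^∞ u(x)([M^g_w f](x))^q dx)^{1/q} ≤ C (∫₀^∞ v(x) f(x)^p dx)^{1/p} holds for all admissible f if and only if (∫₀^∞ U(x)([M^g h](x))^q dx)^{1/q} ≤ C (∫₀^∞ V(x) h(x)^p dx)^{1/p} holds for all admissible h, with the same constant C, where U(x) = u(W⁻¹(x))/W'(W⁻¹(x)) and V(x) = v(W⁻¹(x))/W'(W⁻¹(x)). -/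
open MeasureTheory Set

/-- Reduction lemma: the weighted strong type `(p,q)` inequality for the generalized
weighted mean operator `M^g_w` is equivalent to the corresponding inequality for the
non-weighted operator `M^g` with transformed weights `U, V`. -/
theorem reduction_lemma (p q C : ℝ) (hp : 0 < p) (hq : 0 < q) (hC : 0 < C)
    (u v w g ginv Winv : ℝ → ℝ)
    (hu : ∀ x, 0 ≤ u x) (hv : ∀ x, 0 ≤ v x)
    (hw : ∀ x > 0, 0 < w x) (hwc : ContinuousOn w (Ioi 0))
    (hWtop : Filter.Tendsto (fun x => ∫ s in Ioc (0:ℝ) x, w s) Filter.atTop Filter.atTop)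
    (hWinv : ∀ x > 0, Winv (∫ s in Ioc (0:ℝ) x, w s) = x ∧
      (∫ s in Ioc (0:ℝ) (Winv x), w s) = x ∧ 0 < Winv x)
    (hgm : StrictMono g ∨ StrictAnti g) (hgc : Continuous g)
    (hinv : Function.LeftInverse ginv g) :
    (∀ f : ℝ → ℝ, Measurable f → (∀ x > 0, 0 < f x) →
      (∫ x in Ioi (0:ℝ), u x *
          (ginv ((∫ t in Ioc (0:ℝ) x, w t * g (f t)) /
            ∫ s in Ioc (0:ℝ) x, w s)) ^ q) ^ (1/q) ≤
        C * (∫ x in Ioi (0:ℝ), v x * f x ^ p) ^ (1/p)) ↔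
    (∀ h : ℝ → ℝ, Measurable h → (∀ x > 0, 0 < h x) →
      (∫ x in Ioi (0:ℝ), (u (Winv x) / w (Winv x)) *
          (ginv ((1/x) * ∫ t in Ioc (0:ℝ) x, g (h t))) ^ q) ^ (1/q) ≤
        C * (∫ x in Ioi (0:ℝ), (v (Winv x) / w (Winv x)) * h x ^ p) ^ (1/p)) := by
  set W : ℝ → ℝ := fun x => ∫ s in Ioc (0:ℝ) x, w s with hWdef
  -- integrability of w near 0
  have wInt : ∀ x : ℝ, IntegrableOn w (Ioc 0 x) := by
    intro x
    rcases le_or_gt x 0 with hx | hx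
    · rw [Ioc_eq_empty (by exact fun h => absurd (h.trans_le hx) (lt_irrefl 0))]
      exact integrableOn_empty
    · by_contra hni
      have hzero : ∀ y, x ≤ y → W y = 0 := by
        intro y hy
        apply integral_undef
        intro hI
        exact hni (MeasureTheory.IntegrableOn.mono_set hI (Ioc_subset_Ioc_right hy))
      have h1 : W x = 0 := hzero x le_rfl
      have h2 : W (x + 1) = 0 := hzero (x + 1) (by linarith)
      have e1 : Winv (W x) = x := (hWinv x hx).1
      have e2 : Winv (W (x + 1)) = x + 1 := (hWinv (x + 1) (by linarith : (0:ℝ) < x + 1)).1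
      rw [h1] at e1; rw [h2] at e2
      linarith
  have WinvW : ∀ x > 0, Winv (W x) = x := fun x hx => (hWinv x hx).1
  have WWinv : ∀ y > 0, W (Winv y) = y := fun y hy => (hWinv y hy).2.1
  have Winvpos : ∀ y > 0, 0 < Winv y := fun y hy => (hWinv y hy).2.2
  have Wnonneg : ∀ x : ℝ, 0 ≤ W x := fun x =>
    setIntegral_nonneg measurableSet_Ioc (fun t ht => (hw t ht.1).le)
  have Wmono : Monotone W := by
    intro x y hxy
    rcases le_or_gt x 0 with hx | hx
    · have : Ioc (0:ℝ) x = ∅ := Ioc_eq_empty (by exact fun h => absurd (h.trans_le hx) (lt_irrefl 0))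
      show (∫ s in Ioc (0:ℝ) x, w s) ≤ W y
      rw [this, MeasureTheory.setIntegral_empty]
      exact Wnonneg y
    · exact setIntegral_mono_set (wInt y)
        ((ae_restrict_iff' measurableSet_Ioc).mpr (Filter.Eventually.of_forall
          fun t ht => (hw t ht.1).le))
        (HasSubset.Subset.eventuallyLE (Ioc_subset_Ioc_right hxy))
  have Wpos : ∀ x > 0, 0 < W x := by
    intro x hx
    rcases lt_or_eq_of_le (Wnonneg x) with h | h
    · exact h
    · exfalso
      have hhalf : W (x/2) = 0 :=
        le_antisymm (by rw [h]; exact Wmono (by linarith)) (Wnonneg _)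
      have e1 : Winv (W (x/2)) = x/2 := WinvW (x/2) (by linarith)
      have e2 : Winv (W x) = x := WinvW x hx
      rw [hhalf] at e1; rw [← h] at e2
      rw [e1] at e2; linarith
  have Winj : InjOn W (Ioi 0) := by
    intro a ha b hb hab
    rw [← WinvW a ha, hab, WinvW b hb]
  have WsMono : StrictMonoOn W (Ioi 0) := fun a ha b hb hab =>
    lt_of_le_of_ne (Wmono hab.le) (fun h => hab.ne (Winj ha hb h))
  have Wderiv : ∀ x ∈ Ioi (0:ℝ), HasDerivAt W (w x) x := by
    intro x hx
    have hx' : (0:ℝ) < x := hx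
    have h1 : HasDerivAt (fun u => ∫ t in (0:ℝ)..u, w t) (w x) x :=
      intervalIntegral.integral_hasDerivAt_right
        ((intervalIntegrable_iff_integrableOn_Ioc_of_le hx'.le).mpr (wInt x))
        ⟨Ioi 0, Ioi_mem_nhds hx', hwc.aestronglyMeasurable measurableSet_Ioi⟩
        (hwc.continuousAt (Ioi_mem_nhds hx'))
    apply h1.congr_of_eventuallyEq
    filter_upwards [Ioi_mem_nhds hx'] with y hy
    show W y = ∫ t in (0:ℝ)..y, w t
    exact (intervalIntegral.integral_of_le (le_of_lt hy)).symm
  have Wmeas : Measurable W := Wmono.measurable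
  have imIoi : W '' Ioi 0 = Ioi 0 := by
    apply Subset.antisymm
    · rintro _ ⟨x, hx, rfl⟩
      exact Wpos x hx
    · intro y hy
      exact ⟨Winv y, Winvpos y hy, WWinv y hy⟩
  have imIoc : ∀ x > 0, W '' Ioc 0 x = Ioc 0 (W x) := by
    intro x hx
    apply Subset.antisymm
    · rintro _ ⟨t, ⟨ht0, htx⟩, rfl⟩
      exact ⟨Wpos t ht0, Wmono htx⟩
    · rintro y ⟨hy0, hyW⟩
      refine ⟨Winv y, ⟨Winvpos y hy0, ?_⟩, WWinv y hy0⟩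
      by_contra hlt
      push_neg at hlt
      have := WsMono hx (Winvpos y hy0) hlt
      rw [WWinv y hy0] at this
      linarith
  -- change of variables on Ioi 0
  have covIoi : ∀ F : ℝ → ℝ,
      (∫ x in Ioi (0:ℝ), F x) = ∫ x in Ioi (0:ℝ), w x * F (W x) := by
    intro F
    have := integral_image_eq_integral_abs_deriv_smul measurableSet_Ioi
      (fun x hx => (Wderiv x hx).hasDerivWithinAt) Winj F
    rw [imIoi] at this
    rw [this]
    refine setIntegral_congr_fun measurableSet_Ioi fun x hx => ?_
    rw [smul_eq_mul, abs_of_pos (hw x hx)]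
  -- change of variables on Ioc 0 x
  have covIoc : ∀ x > 0, ∀ F : ℝ → ℝ,
      (∫ t in Ioc (0:ℝ) (W x), F t) = ∫ t in Ioc (0:ℝ) x, w t * F (W t) := by
    intro x hx F
    have := integral_image_eq_integral_abs_deriv_smul (measurableSet_Ioc : MeasurableSet (Ioc (0:ℝ) x))
      (fun t ht => ((Wderiv t ht.1).hasDerivWithinAt : HasDerivWithinAt W (w t) (Ioc 0 x) t))
      (Winj.mono Ioc_subset_Ioi_self) F
    rw [imIoc x hx] at this
    rw [this]
    refine setIntegral_congr_fun measurableSet_Ioc fun t ht => ?_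
    rw [smul_eq_mul, abs_of_pos (hw t ht.1)]
  -- the key transfer identities
  have key : ∀ f h : ℝ → ℝ, (∀ x > 0, f x = h (W x)) →
      ((∫ x in Ioi (0:ℝ), (u (Winv x) / w (Winv x)) *
          (ginv ((1/x) * ∫ t in Ioc (0:ℝ) x, g (h t))) ^ q)
        = ∫ x in Ioi (0:ℝ), u x *
          (ginv ((∫ t in Ioc (0:ℝ) x, w t * g (f t)) /
            ∫ s in Ioc (0:ℝ) x, w s)) ^ q)
      ∧ ((∫ x in Ioi (0:ℝ), (v (Winv x) / w (Winv x)) * h x ^ p)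
        = ∫ x in Ioi (0:ℝ), v x * f x ^ p) := by
    intro f h hfh
    have hInner : ∀ x > 0, (∫ t in Ioc (0:ℝ) (W x), g (h t))
        = ∫ t in Ioc (0:ℝ) x, w t * g (f t) := by
      intro x hx
      rw [covIoc x hx (fun t => g (h t))]
      refine setIntegral_congr_fun measurableSet_Ioc fun t ht => ?_
      rw [hfh t ht.1]
    constructor
    · rw [covIoi (fun x => (u (Winv x) / w (Winv x)) *
        (ginv ((1/x) * ∫ t in Ioc (0:ℝ) x, g (h t))) ^ q)]
      refine setIntegral_congr_fun measurableSet_Ioi fun x hx => ?_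
      beta_reduce
      rw [WinvW x hx, hInner x hx,
        show (∫ s in Ioc (0:ℝ) x, w s) = W x from rfl]
      have hwx := (hw x hx).ne'
      rw [one_div, inv_mul_eq_div]
      field_simp
    · rw [covIoi (fun x => (v (Winv x) / w (Winv x)) * h x ^ p)]
      refine setIntegral_congr_fun measurableSet_Ioi fun x hx => ?_
      beta_reduce
      rw [WinvW x hx, ← hfh x hx]
      have hwx := (hw x hx).ne'
      field_simp
  -- measurable monotone extension of Winv
  have WinvMonoOn : ∀ a b : ℝ, 0 < a → a ≤ b → Winv a ≤ Winv b := by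
    intro a b ha hab
    by_contra hlt
    push_neg at hlt
    have hb : (0:ℝ) < b := lt_of_lt_of_le ha hab
    have := WsMono (Winvpos b hb) (Winvpos a ha) hlt
    rw [WWinv a ha, WWinv b hb] at this
    linarith
  set WinvE : ℝ → ℝ := fun x => if 0 < x then Winv x else 0 with hWinvE
  have WinvEmono : Monotone WinvE := by
    intro a b hab
    simp only [hWinvE]
    by_cases ha : 0 < a
    · rw [if_pos ha, if_pos (lt_of_lt_of_le ha hab)]
      exact WinvMonoOn a b ha hab
    · rw [if_neg ha]
      by_cases hb : 0 < b
      · rw [if_pos hb]; exact (Winvpos b hb).le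
      · rw [if_neg hb]
  have WinvEmeas : Measurable WinvE := WinvEmono.measurable
  constructor
  · -- weighted implies non-weighted
    intro H h hm hpos
    set f : ℝ → ℝ := fun x => if 0 < x then h (W x) else 1 with hfdef
    have hfm : Measurable f := Measurable.ite measurableSet_Ioi (hm.comp Wmeas) measurable_const
    have hfh : ∀ x > 0, f x = h (W x) := fun x hx => if_pos hx
    have hfpos : ∀ x > 0, 0 < f x := by
      intro x hx
      rw [hfh x hx]
      exact hpos _ (Wpos x hx)
    obtain ⟨e1, e2⟩ := key f h hfh
    rw [e1, e2]
    exact H f hfm hfpos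
  · -- non-weighted implies weighted
    intro H f hfm hfpos
    set h : ℝ → ℝ := fun x => if 0 < x then f (WinvE x) else 1 with hhdef
    have hm : Measurable h :=
      Measurable.ite measurableSet_Ioi (hfm.comp WinvEmeas) measurable_const
    have hpos : ∀ x > 0, 0 < h x := by
      intro x hx
      show (if 0 < x then f (WinvE x) else 1) > 0
      rw [if_pos hx]
      simp only [hWinvE]
      rw [if_pos hx]
      exact hfpos _ (Winvpos x hx)
    have hfh : ∀ x > 0, f x = h (W x) := by
      intro x hx
      show f x = (if 0 < W x then f (WinvE (W x)) else 1)
      rw [if_pos (Wpos x hx)]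
      simp only [hWinvE]
      rw [if_pos (Wpos x hx), WinvW x hx]
    obtain ⟨e1, e2⟩ := key f h hfh
    rw [← e1, ← e2]
    exact H h hm hpos
end
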